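/- Every integral domain that is not a field is a small ring, i.e. R as an R-module is a small module. -/
import Mathlib


universe u

/-- An `R`-module `K` is a *small module* if there exist an `R`-module `L` and an injective
`R`-linear map `f : K → L` whose image is a superfluous submodule of `L`. -/
def IsSmallModule (R : Type u) [Ring R] (K : Type u) [AddCommGroup K] [Module R K] : Prop :=
  ∃ (L : Type u) (_ : AddCommGroup L) (_ : Module R L) (f : K →ₗ[R] L),
    Function.Injective f ∧
      ∀ X : Submodule R L, LinearMap.range f ⊔ X = ⊤ → X = ⊤

/-- Every integral domain that is not a field is a small ring. -/
theorem stmt_2 (R : Type u) [CommRing R] [IsDomain R] (h : ¬ IsField R) :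
    IsSmallModule R R := by
  classical
  refine ⟨FractionRing R, inferInstance, inferInstance,
    Algebra.linearMap R (FractionRing R), IsFractionRing.injective R _, ?_⟩
  intro X hX
  set K := FractionRing R
  set f : R →ₗ[R] K := Algebra.linearMap R K with hf
  set I : Ideal R := X.comap f with hI
  have key : ∀ r : R, r ≠ 0 → ∃ a : R, 1 - r * a ∈ I := by
    intro r hr
    have hmem : (algebraMap R K r)⁻¹ ∈ LinearMap.range f ⊔ X := hX ▸ Submodule.mem_top
    obtain ⟨y, hy, z, hz, hyz⟩ := Submodule.mem_sup.mp hmem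
    obtain ⟨a, rfl⟩ := hy
    refine ⟨a, ?_⟩
    have hr0 : algebraMap R K r ≠ 0 := by
      simpa using (map_ne_zero_iff _ (IsFractionRing.injective R K)).mpr hr
    have hfz : f (1 - r * a) = r • z := by
      have : z = (algebraMap R K r)⁻¹ - f a := by
        rw [← hyz]; ring
      rw [this]
      simp only [hf, Algebra.linearMap_apply, map_sub, map_mul, smul_sub]
      rw [Algebra.smul_def, Algebra.smul_def, mul_inv_cancel₀ hr0, map_one]
    have : f (1 - r * a) ∈ X := hfz ▸ X.smul_mem r hz
    exact this
  have hI_top : I = ⊤ := by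
    by_contra hIne
    obtain ⟨m, hm, hIm⟩ := Ideal.exists_le_maximal I hIne
    haveI := hm
    have hmbot : m ≠ ⊥ := (Ideal.bot_lt_of_maximal m h).ne'
    obtain ⟨r, hrm, hr0⟩ := Submodule.exists_mem_ne_zero_of_ne_bot hmbot
    obtain ⟨a, ha⟩ := key r hr0
    have h1 : (1 : R) ∈ m := by
      have := m.add_mem (hIm ha) (Ideal.mul_mem_right a m hrm)
      simpa using this
    exact hm.ne_top (Ideal.eq_top_iff_one m |>.mpr h1)
  have h1X : (1 : K) ∈ X := by
    have : (1 : R) ∈ I := hI_top ▸ Submodule.mem_top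
    simpa [hI, hf] using this
  have hrange : LinearMap.range f ≤ X := by
    rintro x ⟨a, rfl⟩
    have : f a = a • (1 : K) := by simp [hf, Algebra.smul_def]
    rw [this]
    exact X.smul_mem a h1X
  rw [← hX, sup_eq_right.mpr hrange]
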